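/- In a population where W is independent of the random vector X̃ (balance holds exactly) with 0 < δ := P(W=1) < 1, the population least-squares coefficient on W in the linear regression of Y on (1, X̃, W) equals E[Y | W=1] − E[Y | W=0], regardless of the true functional form of E[Y | W, X̃]. -/

import Mathlib

open MeasureTheory ProbabilityTheory

/-- **Misspecified linear adjustment is unbiased under exact balance.**
If `W` is binary with `0 < δ = P(W=1) < 1` and independent of the regressors `X̃`
(exact balance), then any coefficients `(γ₀, γ₂, γ₁)` satisfying the population
normal equations for the linear projection of `Y` on `(1, X̃, W)` have
`γ₁ = E[Y | W=1] − E[Y | W=0]`, regardless of the true form of `E[Y | W, X̃]`. -/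
theorem balanced_linear_projection_coefficient
    {Ω : Type*} [m0 : MeasurableSpace Ω]
    (μ : Measure Ω) [IsProbabilityMeasure μ]
    {K : ℕ}
    (W : Ω → ℝ) (hWbin : ∀ ω, W ω = 0 ∨ W ω = 1) (hWmeas : Measurable W)
    (Xt : Ω → Fin K → ℝ) (hXtmeas : Measurable Xt)
    (Y : Ω → ℝ) (hYint : MemLp Y 2 μ) (hXt2 : ∀ j, MemLp (fun ω => Xt ω j) 2 μ)
    (δ : ℝ) (hδ : δ = (μ {ω | W ω = 1}).toReal) (hδ0 : 0 < δ) (hδ1 : δ < 1)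
    -- exact balance: W independent of X̃
    (hindep : IndepFun W Xt μ)
    (γ0 γ1 : ℝ) (γ2 : Fin K → ℝ)
    -- the population normal equations for the projection of Y on (1, X̃, W)
    (resid : Ω → ℝ)
    (hresid : resid = fun ω => Y ω - (γ0 + (∑ j, γ2 j * Xt ω j) + γ1 * W ω))
    (hn1 : ∫ ω, resid ω ∂μ = 0)
    (hnX : ∀ j, ∫ ω, resid ω * Xt ω j ∂μ = 0)
    (hnW : ∫ ω, resid ω * W ω ∂μ = 0) :
    γ1 = (∫ ω in {ω | W ω = 1}, Y ω ∂μ) / δ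
          - (∫ ω in {ω | W ω = 0}, Y ω ∂μ) / (1 - δ) := by
  set A : Set Ω := {ω | W ω = 1} with hAdef
  have hA : MeasurableSet A := hWmeas (measurableSet_singleton 1)
  have hWind : W = A.indicator (fun _ => (1 : ℝ)) := by
    funext ω
    rcases hWbin ω with h | h <;> simp [Set.indicator, hAdef, h]
  have hWint : Integrable W μ := by
    rw [hWind]; exact (integrable_const 1).indicator hA
  have hYI : Integrable Y μ := hYint.integrable one_le_two
  have hXI : ∀ j, Integrable (fun ω => Xt ω j) μ := fun j => (hXt2 j).integrable one_le_two
  have hEW : ∫ ω, W ω ∂μ = δ := by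
    rw [hWind, integral_indicator hA, setIntegral_const, smul_eq_mul, mul_one, measureReal_def, hδ]
  -- complement set
  have hcomp : {ω | W ω = 0} = Aᶜ := by
    ext ω
    rcases hWbin ω with h | h <;> simp [hAdef, h]
  -- Y * W = indicator of A applied to Y
  have hYW : (fun ω => Y ω * W ω) = A.indicator Y := by
    funext ω
    rcases hWbin ω with h | h <;>
      simp [Set.indicator, hAdef, h]
  have hXW : ∀ j, ∫ ω, Xt ω j * W ω ∂μ = δ * ∫ ω, Xt ω j ∂μ := by
    intro j
    have hj : IndepFun W (fun ω => Xt ω j) μ :=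
      hindep.comp measurable_id (measurable_pi_apply j)
    have := hj.integral_fun_mul_eq_mul_integral hWint.aestronglyMeasurable (hXI j).aestronglyMeasurable
    calc ∫ ω, Xt ω j * W ω ∂μ = ∫ ω, W ω * Xt ω j ∂μ := by simp [mul_comm]
      _ = (∫ ω, W ω ∂μ) * ∫ ω, Xt ω j ∂μ := this
      _ = δ * ∫ ω, Xt ω j ∂μ := by rw [hEW]
  set S : ℝ := ∑ j, γ2 j * ∫ ω, Xt ω j ∂μ with hS
  have hsumI : Integrable (fun ω => ∑ j, γ2 j * Xt ω j) μ :=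
    integrable_finset_sum _ (fun j _ => ((hXI j).const_mul (γ2 j)))
  have hI1 : Integrable (fun ω => γ0 + (∑ j, γ2 j * Xt ω j)) μ := by
    exact (integrable_const γ0).add hsumI
  have hI2 : Integrable (fun ω => γ0 + (∑ j, γ2 j * Xt ω j) + γ1 * W ω) μ := by
    exact hI1.add (hWint.const_mul γ1)
  -- first normal equation
  have e1 : ∫ ω, Y ω ∂μ = γ0 + S + γ1 * δ := by
    have : ∫ ω, resid ω ∂μ
        = (∫ ω, Y ω ∂μ) - (γ0 + S + γ1 * δ) := by
      rw [hresid]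
      rw [integral_sub hYI hI2]
      congr 1
      rw [integral_add hI1 (hWint.const_mul γ1),
          integral_add (integrable_const γ0) hsumI, integral_const,
          integral_finset_sum _ (fun j _ => (hXI j).const_mul (γ2 j)),
          integral_const_mul, hEW]
      simp [hS, integral_const_mul]
    rw [hn1] at this
    linarith
  -- W normal equation
  have hYWint : Integrable (fun ω => Y ω * W ω) μ := by
    rw [hYW]; exact hYI.indicator hA
  have hXWint : ∀ j, Integrable (fun ω => Xt ω j * W ω) μ := by
    intro j
    have : (fun ω => Xt ω j * W ω) = A.indicator (fun ω => Xt ω j) := by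
      funext ω
      rcases hWbin ω with h | h <;> simp [Set.indicator, hAdef, h]
    rw [this]; exact (hXI j).indicator hA
  have hWW : ∀ ω, W ω * W ω = W ω := by
    intro ω; rcases hWbin ω with h | h <;> simp [h]
  have e2 : ∫ ω in A, Y ω ∂μ = γ0 * δ + S * δ + γ1 * δ := by
    have hexp : (fun ω => resid ω * W ω)
        = fun ω => Y ω * W ω - (γ0 * W ω + (∑ j, γ2 j * (Xt ω j * W ω)) + γ1 * W ω) := by
      funext ω
      rw [hresid]
      rcases hWbin ω with h | h <;> simp [h] <;> ring
    have hsumWI : Integrable (fun ω => ∑ j, γ2 j * (Xt ω j * W ω)) μ :=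
      integrable_finset_sum _ (fun j _ => ((hXWint j).const_mul (γ2 j)))
    have hJ1 : Integrable (fun ω => γ0 * W ω + (∑ j, γ2 j * (Xt ω j * W ω))) μ := by
      exact (hWint.const_mul γ0).add hsumWI
    have hJ2 : Integrable (fun ω => γ0 * W ω + (∑ j, γ2 j * (Xt ω j * W ω)) + γ1 * W ω) μ := by
      exact hJ1.add (hWint.const_mul γ1)
    have hval : ∫ ω, resid ω * W ω ∂μ
        = (∫ ω in A, Y ω ∂μ) - (γ0 * δ + S * δ + γ1 * δ) := by
      rw [hexp, integral_sub hYWint hJ2]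
      congr 1
      · rw [hYW, integral_indicator hA]
      rw [integral_add hJ1 (hWint.const_mul γ1),
          integral_add (hWint.const_mul γ0) hsumWI,
          integral_const_mul, integral_const_mul, hEW,
          integral_finset_sum _ (fun j _ => (hXWint j).const_mul (γ2 j))]
      have : ∀ j, ∫ ω, γ2 j * (Xt ω j * W ω) ∂μ = γ2 j * (δ * ∫ ω, Xt ω j ∂μ) := by
        intro j; rw [integral_const_mul, hXW j]
      rw [Finset.sum_congr rfl (fun j _ => this j), hS, Finset.sum_mul]
      have h2 : ∑ j, γ2 j * (δ * ∫ ω, Xt ω j ∂μ)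
          = ∑ j, (γ2 j * ∫ ω, Xt ω j ∂μ) * δ :=
        Finset.sum_congr rfl fun j _ => by ring
      rw [h2]
    rw [hnW] at hval
    linarith
  -- complement integral
  have e3 : ∫ ω in {ω | W ω = 0}, Y ω ∂μ = (∫ ω, Y ω ∂μ) - ∫ ω in A, Y ω ∂μ := by
    rw [hcomp]
    have := integral_add_compl hA hYI
    linarith
  rw [e3, e1, e2]
  have h1δ : (1 : ℝ) - δ ≠ 0 := by linarith
  field_simp
  ring
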